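/- arXiv:2305.04267 — 3 statements merged into one kernel-verified Lean document; each statement's English description precedes it below -/
import Mathlib

section
/- (Lemma 3, D1–D2 comparison.) Let (W, a, b) and (W*, a*, b*) be parameter triples with a, a* ∈ {−1,1}^r satisfying ‖W‖₀ + ‖b‖₀ + ‖W*‖₀ + ‖b*‖₀ ≤ S, ‖W‖₁ + ‖b‖₁ ≤ ‖W*‖₁ + ‖b*‖₁, and ‖w*_j‖₂² + |b*_j|² ≤ 1 for each j. Then D1((W,a,b),(W*,a*,b*)) ≤ 2·√S·D2((W,a,b),(W*,a*,b*)). -/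
open MeasureTheory ProbabilityTheory Finset Real

noncomputable section

/-- The ReLU function. -/
def relu (v : ℝ) : ℝ := max v 0

/-- Two-layer ReLU network `f_{W,a,b}(x) = ∑_j a_j relu(w_jᵀ x + b_j)`. -/
def nnF {p r : ℕ} (W : Fin p → Fin r → ℝ) (a b : Fin r → ℝ) (x : Fin p → ℝ) : ℝ :=
  ∑ j, a j * relu ((∑ i, W i j * x i) + b j)

/-- Entrywise ℓ¹ norm of a vector. -/
def l1V {p : ℕ} (w : Fin p → ℝ) : ℝ := ∑ i, |w i|

/-- Euclidean norm of a vector. -/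
def l2V {p : ℕ} (w : Fin p → ℝ) : ℝ := Real.sqrt (∑ i, (w i) ^ 2)

/-- ℓ∞ norm of a vector. -/
def linfV {p : ℕ} (w : Fin p → ℝ) : ℝ := ⨆ i, |w i|

/-- Entrywise ℓ¹ norm of a matrix. -/
def l1M {p r : ℕ} (W : Fin p → Fin r → ℝ) : ℝ := ∑ i, ∑ j, |W i j|

/-- Frobenius norm of a matrix. -/
def frobM {p r : ℕ} (W : Fin p → Fin r → ℝ) : ℝ := Real.sqrt (∑ i, ∑ j, (W i j) ^ 2)

open Classical in
/-- Number of nonzero entries of a matrix. -/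
def l0M {p r : ℕ} (W : Fin p → Fin r → ℝ) : ℕ :=
  (Finset.univ.filter (fun ij : Fin p × Fin r => W ij.1 ij.2 ≠ 0)).card

open Classical in
/-- Number of nonzero entries of a vector. -/
def l0V {p : ℕ} (w : Fin p → ℝ) : ℕ :=
  (Finset.univ.filter (fun i : Fin p => w i ≠ 0)).card

open Classical in
/-- Per-neuron distance `d1`. -/
def d1 {p : ℕ} (w : Fin p → ℝ) (a b : ℝ) (w' : Fin p → ℝ) (a' b' : ℝ) : ℝ :=
  if a = a' then l1V (fun i => w i - w' i) + |b - b'|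
  else l1V w + l1V w' + |b| + |b'|

open Classical in
/-- Per-neuron distance `d2`. -/
def d2 {p : ℕ} (w : Fin p → ℝ) (a b : ℝ) (w' : Fin p → ℝ) (a' b' : ℝ) : ℝ :=
  if a = a' then Real.sqrt ((l2V (fun i => w i - w' i)) ^ 2 + |b - b'| ^ 2)
  else 1

/-- `D1` distance: minimum over permutations of the sum of `d1` distances. -/
def D1 {p r : ℕ} (W : Fin p → Fin r → ℝ) (a b : Fin r → ℝ)
    (W' : Fin p → Fin r → ℝ) (a' b' : Fin r → ℝ) : ℝ :=
  Finset.univ.inf' Finset.univ_nonempty fun (σπ : Equiv.Perm (Fin r)) =>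
    ∑ j, d1 (fun i => W i (σπ j)) (a (σπ j)) (b (σπ j)) (fun i => W' i j) (a' j) (b' j)

/-- `D2` distance: minimum over permutations of the square root of the sum of `d2²`. -/
def D2 {p r : ℕ} (W : Fin p → Fin r → ℝ) (a b : Fin r → ℝ)
    (W' : Fin p → Fin r → ℝ) (a' b' : Fin r → ℝ) : ℝ :=
  Real.sqrt (Finset.univ.inf' Finset.univ_nonempty fun (σπ : Equiv.Perm (Fin r)) =>
    ∑ j, (d2 (fun i => W i (σπ j)) (a (σπ j)) (b (σπ j)) (fun i => W' i j) (a' j) (b' j)) ^ 2)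

/-- Standard Gaussian measure `N(0, I_p)` on `ℝ^p`. -/
def stdGaussian (p : ℕ) : Measure (Fin p → ℝ) := Measure.pi fun _ => gaussianReal 0 1

instance (p : ℕ) : IsProbabilityMeasure (stdGaussian p) := by
  unfold _root_.stdGaussian; infer_instance

/-- Law of `n` i.i.d. samples from `N(0, I_p)`. -/
def samples (n p : ℕ) : Measure (Fin n → Fin p → ℝ) := Measure.pi fun _ => stdGaussian p

instance (n p : ℕ) : IsProbabilityMeasure (samples n p) := by
  unfold samples; infer_instance

/-- `a ∈ {−1, 1}^r`. -/
def IsSign {r : ℕ} (a : Fin r → ℝ) : Prop := ∀ j, a j = 1 ∨ a j = -1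

/-- `(Wh, ah, bh)` is a LASSO minimizer for data `(X, y)` at noise level `σ`. -/
def IsLasso {n p r : ℕ} (X : Fin n → Fin p → ℝ) (y : Fin n → ℝ) (σ : ℝ)
    (Wh : Fin p → Fin r → ℝ) (ah bh : Fin r → ℝ) : Prop :=
  IsSign ah ∧
  (1 / (n : ℝ)) * ∑ i, (y i - nnF Wh ah bh (X i)) ^ 2 ≤ σ ^ 2 ∧
  ∀ (W : Fin p → Fin r → ℝ) (a b : Fin r → ℝ), IsSign a →
    (1 / (n : ℝ)) * ∑ i, (y i - nnF W a b (X i)) ^ 2 ≤ σ ^ 2 →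
    l1M Wh ≤ l1M W

/-- Assumption 1 of the paper. -/
def Assumption1 {p r : ℕ} (B ω : ℝ) (Ws : Fin p → Fin r → ℝ) (bs : Fin r → ℝ) : Prop :=
  1 ≤ B ∧ 0 < ω ∧
  (∀ j, 1 ≤ l2V (fun i => Ws i j) ∧ l2V (fun i => Ws i j) ≤ B ∧ |bs j| ≤ B) ∧
  ∀ j k, j ≠ k →
    |∑ i, Ws i j * Ws i k| / (l2V (fun i => Ws i j) * l2V (fun i => Ws i k)) ≤ (r : ℝ) ^ (-ω)


namespace D1D2Aux

lemma two_dim_cauchy {s1 s2 x y : ℝ} (hs1 : 0 ≤ s1) (hs2 : 0 ≤ s2) (hx : 0 ≤ x) (hy : 0 ≤ y) :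
    Real.sqrt s1 * x + Real.sqrt s2 * y ≤ Real.sqrt (s1 + s2) * Real.sqrt (x ^ 2 + y ^ 2) := by
  have h1 : Real.sqrt s1 ^ 2 = s1 := Real.sq_sqrt hs1
  have h2 : Real.sqrt s2 ^ 2 = s2 := Real.sq_sqrt hs2
  have hL : 0 ≤ Real.sqrt s1 * x + Real.sqrt s2 * y := by positivity
  have key : (Real.sqrt s1 * x + Real.sqrt s2 * y) ^ 2 ≤ (s1 + s2) * (x ^ 2 + y ^ 2) := by
    nlinarith [sq_nonneg (Real.sqrt s1 * y - Real.sqrt s2 * x)]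
  calc Real.sqrt s1 * x + Real.sqrt s2 * y
      = Real.sqrt ((Real.sqrt s1 * x + Real.sqrt s2 * y) ^ 2) := (Real.sqrt_sq hL).symm
    _ ≤ Real.sqrt ((s1 + s2) * (x ^ 2 + y ^ 2)) := Real.sqrt_le_sqrt key
    _ = _ := Real.sqrt_mul (by positivity) _

lemma l2V_nonneg {p : ℕ} (v : Fin p → ℝ) : 0 ≤ l2V v := Real.sqrt_nonneg _

lemma l2V_sq {p : ℕ} (v : Fin p → ℝ) : (l2V v) ^ 2 = ∑ i, v i ^ 2 :=
  Real.sq_sqrt (Finset.sum_nonneg fun i _ => sq_nonneg _)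

lemma l1V_nonneg {p : ℕ} (v : Fin p → ℝ) : 0 ≤ l1V v :=
  Finset.sum_nonneg fun i _ => abs_nonneg _

lemma l1V_le {p : ℕ} (v : Fin p → ℝ) : l1V v ≤ Real.sqrt (l0V v) * l2V v := by
  classical
  have h := Finset.sum_mul_sq_le_sq_mul_sq Finset.univ
    (fun i => if v i ≠ 0 then (1:ℝ) else 0) (fun i => |v i|)
  have e1 : ∑ i, (if v i ≠ 0 then (1:ℝ) else 0) * |v i| = l1V v := by
    unfold l1V; apply Finset.sum_congr rfl; intro i _
    by_cases h : v i = 0 <;> simp [h]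
  have e2 : ∑ i, (if v i ≠ 0 then (1:ℝ) else 0) ^ 2 = (l0V v : ℝ) := by
    unfold l0V
    rw [Finset.card_filter]; push_cast
    apply Finset.sum_congr rfl; intro i _; by_cases h : v i = 0 <;> simp [h]
  have e3 : ∑ i : Fin p, |v i| ^ 2 = ∑ i, v i ^ 2 := by simp [sq_abs]
  rw [e1, e2, e3] at h
  have hl1 : 0 ≤ l1V v := l1V_nonneg v
  calc l1V v = Real.sqrt ((l1V v) ^ 2) := (Real.sqrt_sq hl1).symm
    _ ≤ Real.sqrt ((l0V v : ℝ) * ∑ i, v i ^ 2) := Real.sqrt_le_sqrt h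
    _ = Real.sqrt (l0V v) * l2V v := Real.sqrt_mul (by positivity) _

lemma l0V_sub_le {p : ℕ} (v w : Fin p → ℝ) :
    l0V (fun i => v i - w i) ≤ l0V v + l0V w := by
  classical
  unfold l0V
  have hsub : (Finset.univ.filter (fun i => v i - w i ≠ 0)) ⊆
      (Finset.univ.filter (fun i => v i ≠ 0)) ∪ (Finset.univ.filter (fun i => w i ≠ 0)) := by
    intro i hi
    simp only [Finset.mem_filter, Finset.mem_union, Finset.mem_univ, true_and] at *
    by_contra hc; push_neg at hc
    exact hi (by rw [hc.1, hc.2]; ring)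
  calc _ ≤ _ := Finset.card_le_card hsub
    _ ≤ _ := Finset.card_union_le _ _

lemma l1V_triangle {p : ℕ} (v w : Fin p → ℝ) :
    l1V w ≤ l1V v + l1V (fun i => v i - w i) := by
  unfold l1V
  rw [← Finset.sum_add_distrib]
  apply Finset.sum_le_sum
  intro i _
  calc |w i| = |v i - (v i - w i)| := by ring_nf
    _ ≤ |v i| + |v i - w i| := abs_sub _ _

lemma l0M_eq {p r : ℕ} (W : Fin p → Fin r → ℝ) :
    l0M W = ∑ j, l0V (fun i => W i j) := by
  classical
  unfold l0M l0V
  rw [Finset.card_filter, ← Finset.univ_product_univ, Finset.sum_product, Finset.sum_comm]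
  apply Finset.sum_congr rfl; intro j _
  rw [Finset.card_filter]

lemma l1M_eq {p r : ℕ} (W : Fin p → Fin r → ℝ) :
    l1M W = ∑ j, l1V (fun i => W i j) := by
  unfold l1M l1V; exact Finset.sum_comm

lemma l0V_eq_sum {p : ℕ} (v : Fin p → ℝ) :
    (l0V v : ℝ) = ∑ i, if v i = 0 then (0:ℝ) else 1 := by
  classical
  unfold l0V
  rw [Finset.card_filter]; push_cast
  apply Finset.sum_congr rfl; intro i _; by_cases h : v i = 0 <;> simp [h]

end D1D2Aux

/-- Lemma 3 (D1–D2 comparison). -/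
theorem D1_le_D2 (p r S : ℕ) (W Ws : Fin p → Fin r → ℝ) (a as b bs : Fin r → ℝ)
    (ha : IsSign a) (has : IsSign as)
    (hS : l0M W + l0V b + l0M Ws + l0V bs ≤ S)
    (hl1 : l1M W + l1V b ≤ l1M Ws + l1V bs)
    (hnorm : ∀ j, (l2V fun i => Ws i j) ^ 2 + |bs j| ^ 2 ≤ 1) :
    D1 W a b Ws as bs ≤ 2 * Real.sqrt (S : ℝ) * D2 W a b Ws as bs := by
  classical
  obtain ⟨σ, -, hσ⟩ := Finset.exists_mem_eq_inf' (Finset.univ_nonempty)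
    (fun (σπ : Equiv.Perm (Fin r)) => ∑ j, (d2 (fun i => W i (σπ j)) (a (σπ j)) (b (σπ j))
      (fun i => Ws i j) (as j) (bs j)) ^ 2)
  set g : Fin r → ℝ := fun j => d2 (fun i => W i (σ j)) (a (σ j)) (b (σ j))
      (fun i => Ws i j) (as j) (bs j) with hgdef
  set f : Fin r → ℝ := fun j => d1 (fun i => W i (σ j)) (a (σ j)) (b (σ j))
      (fun i => Ws i j) (as j) (bs j) with hfdef
  set t : Fin r → ℝ := fun j => ((l0V (fun i => W i (σ j)) : ℝ) + (l0V (fun i => Ws i j) : ℝ))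
      + ((if b (σ j) = 0 then (0:ℝ) else 1) + (if bs j = 0 then (0:ℝ) else 1)) with htdef
  set h : Fin r → ℝ := fun j => if a (σ j) = as j
      then l1V (fun i => W i (σ j) - Ws i j) + |b (σ j) - bs j|
      else l1V (fun i => Ws i j) + |bs j| with hhdef
  set ε : Fin r → ℝ := fun j =>
      (l1V (fun i => Ws i j) + |bs j|) - (l1V (fun i => W i (σ j)) + |b (σ j)|) with hedef
  have hg0 : ∀ j, 0 ≤ g j := by
    intro j; rw [hgdef]; simp only [d2]
    split_ifs
    · exact Real.sqrt_nonneg _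
    · norm_num
  have ht0 : ∀ j, 0 ≤ t j := by
    intro j; rw [htdef]; dsimp only
    have : (0:ℝ) ≤ (if b (σ j) = 0 then (0:ℝ) else 1) := by split_ifs <;> norm_num
    have : (0:ℝ) ≤ (if bs j = 0 then (0:ℝ) else 1) := by split_ifs <;> norm_num
    positivity
  -- pointwise f + ε ≤ 2 h
  have hfe : ∀ j, f j + ε j ≤ 2 * h j := by
    intro j
    rw [hfdef, hhdef, hedef]; simp only [d1]
    by_cases hc : a (σ j) = as j
    · rw [if_pos hc, if_pos hc]
      have h1 := D1D2Aux.l1V_triangle (fun i => W i (σ j)) (fun i => Ws i j)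
      have h2 : |bs j| ≤ |b (σ j)| + |b (σ j) - bs j| := by
        calc |bs j| = |b (σ j) - (b (σ j) - bs j)| := by ring_nf
          _ ≤ _ := abs_sub _ _
      linarith
    · rw [if_neg hc, if_neg hc]
      ring_nf
      linarith [le_refl (0:ℝ)]
  -- pointwise h ≤ √t ⬝ g
  have hhg : ∀ j, h j ≤ Real.sqrt (t j) * g j := by
    intro j
    rw [hhdef, hgdef, htdef]; simp only [d2]
    set s1 : ℝ := (l0V (fun i => W i (σ j)) : ℝ) + (l0V (fun i => Ws i j) : ℝ) with hs1
    set s2 : ℝ := (if b (σ j) = 0 then (0:ℝ) else 1) + (if bs j = 0 then (0:ℝ) else 1) with hs2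
    have hs1n : 0 ≤ s1 := by positivity
    have hs2n : 0 ≤ s2 := by rw [hs2]; split_ifs <;> norm_num
    by_cases hc : a (σ j) = as j
    · rw [if_pos hc, if_pos hc]
      have hA : l1V (fun i => W i (σ j) - Ws i j)
          ≤ Real.sqrt s1 * l2V (fun i => W i (σ j) - Ws i j) := by
        refine le_trans (D1D2Aux.l1V_le _) ?_
        apply mul_le_mul_of_nonneg_right _ (D1D2Aux.l2V_nonneg _)
        apply Real.sqrt_le_sqrt
        rw [hs1]
        exact_mod_cast D1D2Aux.l0V_sub_le (fun i => W i (σ j)) (fun i => Ws i j)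
      have hB : |b (σ j) - bs j| ≤ Real.sqrt s2 * |b (σ j) - bs j| := by
        by_cases hb : b (σ j) - bs j = 0
        · rw [hb]; simp
        · have hone : (1:ℝ) ≤ s2 := by
            rw [hs2]
            by_cases h1 : b (σ j) = 0
            · have h2 : bs j ≠ 0 := fun h2 => hb (by rw [h1, h2]; ring)
              simp [h1, h2]
            · split_ifs <;> norm_num
          nlinarith [Real.sqrt_le_sqrt hone, Real.sqrt_one, abs_nonneg (b (σ j) - bs j)]
      calc l1V (fun i => W i (σ j) - Ws i j) + |b (σ j) - bs j|
          ≤ Real.sqrt s1 * l2V (fun i => W i (σ j) - Ws i j)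
            + Real.sqrt s2 * |b (σ j) - bs j| := add_le_add hA hB
        _ ≤ Real.sqrt (s1 + s2) * Real.sqrt
              ((l2V (fun i => W i (σ j) - Ws i j)) ^ 2 + |b (σ j) - bs j| ^ 2) :=
            D1D2Aux.two_dim_cauchy hs1n hs2n (D1D2Aux.l2V_nonneg _) (abs_nonneg _)
    · rw [if_neg hc, if_neg hc, mul_one]
      have hA : l1V (fun i => Ws i j)
          ≤ Real.sqrt (l0V (fun i => Ws i j) : ℝ) * l2V (fun i => Ws i j) :=
        D1D2Aux.l1V_le _
      have hB : |bs j| ≤ Real.sqrt (if bs j = 0 then (0:ℝ) else 1) * |bs j| := by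
        by_cases hb : bs j = 0
        · rw [hb]; simp
        · rw [if_neg hb, Real.sqrt_one, one_mul]
      have h2d := D1D2Aux.two_dim_cauchy (s1 := (l0V (fun i => Ws i j) : ℝ))
        (s2 := if bs j = 0 then (0:ℝ) else 1)
        (by positivity) (by split_ifs <;> norm_num)
        (D1D2Aux.l2V_nonneg (fun i => Ws i j)) (abs_nonneg (bs j))
      have hle1 : Real.sqrt ((l2V fun i => Ws i j) ^ 2 + |bs j| ^ 2) ≤ 1 :=
        Real.sqrt_le_one.mpr (hnorm j)
      have hmono : Real.sqrt ((l0V (fun i => Ws i j) : ℝ) + (if bs j = 0 then (0:ℝ) else 1))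
          ≤ Real.sqrt (s1 + s2) := by
        apply Real.sqrt_le_sqrt
        rw [hs1, hs2]
        have : (0:ℝ) ≤ (l0V (fun i => W i (σ j)) : ℝ) := by positivity
        have : (0:ℝ) ≤ (if b (σ j) = 0 then (0:ℝ) else 1) := by split_ifs <;> norm_num
        linarith
      have hsn : 0 ≤ Real.sqrt ((l0V (fun i => Ws i j) : ℝ) + (if bs j = 0 then (0:ℝ) else 1)) :=
        Real.sqrt_nonneg _
      calc l1V (fun i => Ws i j) + |bs j| ≤ _ := add_le_add hA hB
        _ ≤ Real.sqrt ((l0V (fun i => Ws i j) : ℝ) + (if bs j = 0 then (0:ℝ) else 1))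
            * Real.sqrt ((l2V fun i => Ws i j) ^ 2 + |bs j| ^ 2) := h2d
        _ ≤ Real.sqrt ((l0V (fun i => Ws i j) : ℝ) + (if bs j = 0 then (0:ℝ) else 1)) * 1 :=
            mul_le_mul_of_nonneg_left hle1 hsn
        _ = _ := mul_one _
        _ ≤ Real.sqrt (s1 + s2) := hmono
  -- ∑ ε ≥ 0
  have hεsum : 0 ≤ ∑ j, ε j := by
    have e1 : ∑ j, l1V (fun i => W i (σ j)) = l1M W := by
      rw [D1D2Aux.l1M_eq W]
      exact Equiv.sum_comp σ (fun j => l1V (fun i => W i j))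
    have e2 : ∑ j, |b (σ j)| = l1V b := Equiv.sum_comp σ (fun j => |b j|)
    have e3 : ∑ j, l1V (fun i => Ws i j) = l1M Ws := (D1D2Aux.l1M_eq Ws).symm
    have e4 : ∑ j, |bs j| = l1V bs := rfl
    rw [hedef]
    simp only [Finset.sum_sub_distrib, Finset.sum_add_distrib]
    rw [e1, e2, e3, e4]
    linarith
  -- ∑ t ≤ S
  have htS : ∑ j, t j ≤ (S : ℝ) := by
    have e1 : ∑ j, (l0V (fun i => W i (σ j)) : ℝ) = (l0M W : ℝ) := by
      rw [show (l0M W : ℝ) = ∑ j, (l0V (fun i => W i j) : ℝ) by rw [D1D2Aux.l0M_eq W]; push_cast; rfl]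
      exact Equiv.sum_comp σ (fun j => (l0V (fun i => W i j) : ℝ))
    have e2 : ∑ j, (if b (σ j) = 0 then (0:ℝ) else 1) = (l0V b : ℝ) := by
      rw [D1D2Aux.l0V_eq_sum b]
      exact Equiv.sum_comp σ (fun j => if b j = 0 then (0:ℝ) else 1)
    have e3 : ∑ j, (l0V (fun i => Ws i j) : ℝ) = (l0M Ws : ℝ) := by
      rw [show (l0M Ws : ℝ) = ∑ j, (l0V (fun i => Ws i j) : ℝ) by
        rw [D1D2Aux.l0M_eq Ws]; push_cast; rfl]
    have e4 : ∑ j, (if bs j = 0 then (0:ℝ) else 1) = (l0V bs : ℝ) :=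
      (D1D2Aux.l0V_eq_sum bs).symm
    rw [htdef]
    simp only [Finset.sum_add_distrib]
    rw [e1, e2, e3, e4]
    have hcast : ((l0M W : ℝ) + l0V b + l0M Ws + l0V bs) ≤ (S : ℝ) := by exact_mod_cast hS
    linarith
  -- Cauchy–Schwarz across neurons
  have hCS : ∑ j, Real.sqrt (t j) * g j ≤ Real.sqrt (S : ℝ) * Real.sqrt (∑ j, g j ^ 2) := by
    have hcs := Finset.sum_mul_sq_le_sq_mul_sq Finset.univ (fun j => Real.sqrt (t j)) g
    have e : ∑ j, (Real.sqrt (t j)) ^ 2 = ∑ j, t j :=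
      Finset.sum_congr rfl fun j _ => Real.sq_sqrt (ht0 j)
    rw [e] at hcs
    have hLn : 0 ≤ ∑ j, Real.sqrt (t j) * g j :=
      Finset.sum_nonneg fun j _ => mul_nonneg (Real.sqrt_nonneg _) (hg0 j)
    have hg2 : 0 ≤ ∑ j, g j ^ 2 := Finset.sum_nonneg fun j _ => sq_nonneg _
    calc ∑ j, Real.sqrt (t j) * g j
        = Real.sqrt ((∑ j, Real.sqrt (t j) * g j) ^ 2) := (Real.sqrt_sq hLn).symm
      _ ≤ Real.sqrt ((∑ j, t j) * ∑ j, g j ^ 2) := Real.sqrt_le_sqrt hcs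
      _ ≤ Real.sqrt ((S : ℝ) * ∑ j, g j ^ 2) := by
          apply Real.sqrt_le_sqrt
          exact mul_le_mul_of_nonneg_right htS hg2
      _ = _ := Real.sqrt_mul (by positivity) _
  have hD1 : D1 W a b Ws as bs ≤ ∑ j, f j := Finset.inf'_le _ (Finset.mem_univ σ)
  have hD2 : D2 W a b Ws as bs = Real.sqrt (∑ j, g j ^ 2) := by
    unfold D2; rw [hσ]
  calc D1 W a b Ws as bs ≤ ∑ j, f j := hD1
    _ ≤ (∑ j, f j) + ∑ j, ε j := le_add_of_nonneg_right hεsum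
    _ = ∑ j, (f j + ε j) := (Finset.sum_add_distrib).symm
    _ ≤ ∑ j, 2 * h j := Finset.sum_le_sum fun j _ => hfe j
    _ = 2 * ∑ j, h j := by rw [Finset.mul_sum]
    _ ≤ 2 * ∑ j, Real.sqrt (t j) * g j := by
        have hsum : ∑ j, h j ≤ ∑ j, Real.sqrt (t j) * g j :=
          Finset.sum_le_sum (fun j (_ : j ∈ Finset.univ) => hhg j)
        linarith
    _ ≤ 2 * (Real.sqrt (S : ℝ) * Real.sqrt (∑ j, g j ^ 2)) := by linarith [hCS]
    _ = 2 * Real.sqrt (S : ℝ) * D2 W a b Ws as bs := by rw [hD2]; ring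
end
end

section
/- (Pointwise Lipschitz-type bound in D1.) For any two parameter triples (W, a, b) and (W', a', b') with W, W' ∈ ℝ^{p×r}, a, a' ∈ {−1,1}^r, b, b' ∈ ℝ^r, and any x ∈ ℝ^p: |f_{W,a,b}(x) − f_{W',a',b'}(x)| ≤ D1((W,a,b),(W',a',b'))·max{‖x‖_∞, 1}. -/
open MeasureTheory ProbabilityTheory Finset Real

noncomputable section

lemma dot_abs_bound {p : ℕ} (v x : Fin p → ℝ) (M : ℝ) (hMx : ∀ i, |x i| ≤ M) :
    |∑ i, v i * x i| ≤ l1V v * M := by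
  calc |∑ i, v i * x i| ≤ ∑ i, |v i * x i| := Finset.abs_sum_le_sum_abs _ _
    _ ≤ ∑ i, |v i| * M := by
        refine Finset.sum_le_sum fun i _ => ?_
        rw [abs_mul]
        exact mul_le_mul_of_nonneg_left (hMx i) (abs_nonneg _)
    _ = l1V v * M := by rw [l1V, Finset.sum_mul]

lemma neuron_bound {p : ℕ} (w w' : Fin p → ℝ) (a a' b b' : ℝ)
    (ha : a = 1 ∨ a = -1) (ha' : a' = 1 ∨ a' = -1) (x : Fin p → ℝ) :
    |a * relu ((∑ i, w i * x i) + b) - a' * relu ((∑ i, w' i * x i) + b')| ≤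
      d1 w a b w' a' b' * max (linfV x) 1 := by
  set M := max (linfV x) 1 with hM
  have hM1 : (1 : ℝ) ≤ M := le_max_right _ _
  have hM0 : (0 : ℝ) ≤ M := le_trans zero_le_one hM1
  have hMx : ∀ i, |x i| ≤ M := by
    intro i
    refine le_trans ?_ (le_max_left _ _)
    rw [linfV]
    exact le_ciSup (Finite.bddAbove_range fun i => |x i|) i
  have haa : |a| = 1 := by rcases ha with h | h <;> simp [h]
  have haa' : |a'| = 1 := by rcases ha' with h | h <;> simp [h]
  rcases eq_or_ne a a' with h | h
  · subst h
    rw [d1, if_pos rfl]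
    have : |a * relu ((∑ i, w i * x i) + b) - a * relu ((∑ i, w' i * x i) + b')|
        = |relu ((∑ i, w i * x i) + b) - relu ((∑ i, w' i * x i) + b')| := by
      rw [← mul_sub, abs_mul, haa, one_mul]
    rw [this]
    have hlip : |relu ((∑ i, w i * x i) + b) - relu ((∑ i, w' i * x i) + b')| ≤
        |((∑ i, w i * x i) + b) - ((∑ i, w' i * x i) + b')| :=
      abs_max_sub_max_le_abs _ _ _
    refine hlip.trans ?_
    have heq : ((∑ i, w i * x i) + b) - ((∑ i, w' i * x i) + b')
        = (∑ i, (w i - w' i) * x i) + (b - b') := by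
      have h2 : ∑ i, (w i - w' i) * x i = (∑ i, w i * x i) - ∑ i, w' i * x i := by
        rw [← Finset.sum_sub_distrib]
        exact Finset.sum_congr rfl fun i _ => by ring
      rw [h2]; ring
    rw [heq]
    calc |(∑ i, (w i - w' i) * x i) + (b - b')|
        ≤ |∑ i, (w i - w' i) * x i| + |b - b'| := abs_add_le _ _
      _ ≤ l1V (fun i => w i - w' i) * M + |b - b'| * M := by
          refine add_le_add (dot_abs_bound _ _ _ hMx) ?_
          nlinarith [abs_nonneg (b - b')]
      _ = (l1V (fun i => w i - w' i) + |b - b'|) * M := by ring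
  · rw [d1, if_neg h]
    have hb1 : |a * relu ((∑ i, w i * x i) + b)| ≤ (l1V w + |b|) * M := by
      rw [abs_mul, haa, one_mul]
      have h1 : |relu ((∑ i, w i * x i) + b)| ≤ |(∑ i, w i * x i) + b| := by
        rw [relu]
        rcases le_or_gt ((∑ i, w i * x i) + b) 0 with h' | h'
        · rw [max_eq_right h']; simp [abs_nonneg]
        · rw [max_eq_left h'.le]
      refine h1.trans ?_
      calc |(∑ i, w i * x i) + b| ≤ |∑ i, w i * x i| + |b| := abs_add_le _ _
        _ ≤ l1V w * M + |b| * M := by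
            refine add_le_add (dot_abs_bound _ _ _ hMx) ?_
            nlinarith [abs_nonneg b]
        _ = (l1V w + |b|) * M := by ring
    have hb2 : |a' * relu ((∑ i, w' i * x i) + b')| ≤ (l1V w' + |b'|) * M := by
      rw [abs_mul, haa', one_mul]
      have h1 : |relu ((∑ i, w' i * x i) + b')| ≤ |(∑ i, w' i * x i) + b'| := by
        rw [relu]
        rcases le_or_gt ((∑ i, w' i * x i) + b') 0 with h' | h'
        · rw [max_eq_right h']; simp [abs_nonneg]
        · rw [max_eq_left h'.le]
      refine h1.trans ?_
      calc |(∑ i, w' i * x i) + b'| ≤ |∑ i, w' i * x i| + |b'| := abs_add_le _ _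
        _ ≤ l1V w' * M + |b'| * M := by
            refine add_le_add (dot_abs_bound _ _ _ hMx) ?_
            nlinarith [abs_nonneg b']
        _ = (l1V w' + |b'|) * M := by ring
    calc |a * relu ((∑ i, w i * x i) + b) - a' * relu ((∑ i, w' i * x i) + b')|
        ≤ |a * relu ((∑ i, w i * x i) + b)| + |a' * relu ((∑ i, w' i * x i) + b')| :=
          abs_sub _ _
      _ ≤ (l1V w + |b|) * M + (l1V w' + |b'|) * M := add_le_add hb1 hb2
      _ = (l1V w + l1V w' + |b| + |b'|) * M := by ring

/-- pointwise Lipschitz-type bound in D1. -/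
theorem pointwise_D1_bound (p r : ℕ) (W W' : Fin p → Fin r → ℝ)
    (a a' b b' : Fin r → ℝ) (ha : IsSign a) (ha' : IsSign a') (x : Fin p → ℝ) :
    |nnF W a b x - nnF W' a' b' x| ≤ D1 W a b W' a' b' * max (linfV x) 1 := by
  obtain ⟨σ, -, hσ⟩ := Finset.exists_mem_eq_inf' (Finset.univ_nonempty)
    (fun (σπ : Equiv.Perm (Fin r)) =>
      ∑ j, d1 (fun i => W i (σπ j)) (a (σπ j)) (b (σπ j)) (fun i => W' i j) (a' j) (b' j))
  rw [D1, hσ]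
  have hre : nnF W a b x = ∑ j, a (σ j) * relu ((∑ i, W i (σ j) * x i) + b (σ j)) :=
    (Equiv.sum_comp σ _).symm
  rw [hre, nnF, ← Finset.sum_sub_distrib, Finset.sum_mul]
  refine (Finset.abs_sum_le_sum_abs _ _).trans (Finset.sum_le_sum fun j _ => ?_)
  exact neuron_bound _ _ _ _ _ _ (ha (σ j)) (ha' j) x
end
end

section
/- (Shelling inequality.) Let w ∈ ℝ^p, let s ≥ 1 be an integer, and partition {1,…,p} into groups S_1, …, S_L, each of cardinality s except possibly S_L, such that every entry of w indexed in S_j has absolute value at least that of every entry indexed in S_k whenever j < k. Then (Σ_{l=1}^L ‖w_{S_l}‖₂)² ≤ 2·‖w‖₂² + (2·(1 + log L)²/s)·‖w‖₁², where w_{S_l} denotes the restriction of w to the coordinates in S_l. In particular, ‖w_{S_l}‖₂ ≤ ‖w‖₁/((l−1)·√s) for every l ≥ 2. -/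
open MeasureTheory ProbabilityTheory Finset Real

noncomputable section

lemma shelling_key {p L s : ℕ} (w : Fin p → ℝ)
    (S : Fin L → Finset (Fin p))
    (hdisj : ∀ l l' : Fin L, l ≠ l' → Disjoint (S l) (S l'))
    (hcard : ∀ l : Fin L, (l : ℕ) < L - 1 → (S l).card = s)
    (horder : ∀ l l' : Fin L, l < l' → ∀ i ∈ S l, ∀ i' ∈ S l', |w i'| ≤ |w i|)
    (l : Fin L) (i : Fin p) (hi : i ∈ S l) :
    ((l : ℕ) : ℝ) * s * |w i| ≤ ∑ j, |w j| := by
  set T : Finset (Fin p) := (Finset.Iio l).biUnion S with hT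
  have hcardT : T.card = (l : ℕ) * s := by
    rw [hT, Finset.card_biUnion (by intro a ha b hb hab; exact hdisj a b hab)]
    rw [Finset.sum_congr rfl (fun k hk => hcard k ?_)]
    · simp [Fin.card_Iio]
    · have : k < l := Finset.mem_Iio.mp hk
      omega
  have h1 : ((l : ℕ) : ℝ) * s * |w i| = ∑ _j ∈ T, |w i| := by
    rw [Finset.sum_const, hcardT]; push_cast; ring
  rw [h1]
  calc ∑ _j ∈ T, |w i| ≤ ∑ j ∈ T, |w j| := by
        refine Finset.sum_le_sum fun j hj => ?_
        obtain ⟨k, hk, hjk⟩ := Finset.mem_biUnion.mp hj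
        exact horder k l (Finset.mem_Iio.mp hk) j hjk i hi
    _ ≤ ∑ j, |w j| :=
        Finset.sum_le_sum_of_subset_of_nonneg (Finset.subset_univ T)
          (fun j _ _ => abs_nonneg _)

lemma shelling_part2 {p L s : ℕ} (hs : 1 ≤ s) (w : Fin p → ℝ)
    (S : Fin L → Finset (Fin p))
    (hdisj : ∀ l l' : Fin L, l ≠ l' → Disjoint (S l) (S l'))
    (hcard : ∀ l : Fin L, (l : ℕ) < L - 1 → (S l).card = s)
    (hcardle : ∀ l : Fin L, (S l).card ≤ s)
    (horder : ∀ l l' : Fin L, l < l' → ∀ i ∈ S l, ∀ i' ∈ S l', |w i'| ≤ |w i|)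
    (l : Fin L) (hl : 1 ≤ (l : ℕ)) :
    Real.sqrt (∑ i ∈ S l, (w i) ^ 2) ≤ (∑ j, |w j|) / ((l : ℕ) * Real.sqrt (s : ℝ)) := by
  set A := ∑ j, |w j| with hA
  have hA0 : 0 ≤ A := Finset.sum_nonneg fun j _ => abs_nonneg _
  have hl0 : (0 : ℝ) < ((l : ℕ) : ℝ) := by positivity
  have hs0 : (0 : ℝ) < (s : ℝ) := by positivity
  have hss : Real.sqrt s * Real.sqrt s = (s : ℝ) := Real.mul_self_sqrt hs0.le
  have hM : ∀ i ∈ S l, |w i| ≤ A / ((l : ℕ) * s) := by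
    intro i hi
    rw [le_div_iff₀ (by positivity)]
    have := shelling_key w S hdisj hcard horder l i hi
    linarith [this]
  have hsum : ∑ i ∈ S l, (w i) ^ 2 ≤ (A / ((l : ℕ) * Real.sqrt s)) ^ 2 := by
    calc ∑ i ∈ S l, (w i) ^ 2 ≤ ∑ _i ∈ S l, (A / ((l : ℕ) * s)) ^ 2 := by
          refine Finset.sum_le_sum fun i hi => ?_
          have h1 := hM i hi
          have h2 : (0:ℝ) ≤ A / ((l : ℕ) * s) := by positivity
          calc (w i)^2 = |w i|^2 := (sq_abs _).symm
            _ ≤ (A / ((l : ℕ) * s))^2 := by nlinarith [abs_nonneg (w i)]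
      _ = (S l).card * (A / ((l : ℕ) * s)) ^ 2 := by rw [Finset.sum_const]; ring
      _ ≤ (s : ℝ) * (A / ((l : ℕ) * s)) ^ 2 := by
          exact mul_le_mul_of_nonneg_right (by exact_mod_cast hcardle l) (by positivity)
      _ = (A / ((l : ℕ) * Real.sqrt s)) ^ 2 := by
          rw [div_pow, div_pow, mul_pow, mul_pow, Real.sq_sqrt hs0.le]
          have hl2 : (((l : ℕ) : ℝ))^2 ≠ 0 := by positivity
          field_simp
  calc Real.sqrt (∑ i ∈ S l, (w i) ^ 2) ≤ Real.sqrt ((A / ((l : ℕ) * Real.sqrt s)) ^ 2) :=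
        Real.sqrt_le_sqrt hsum
    _ = A / ((l : ℕ) * Real.sqrt s) := Real.sqrt_sq (by positivity)


lemma harm_bound (L : ℕ) (hL : 1 ≤ L) (l0 : Fin L) (h0 : (l0 : ℕ) = 0) :
    ∑ l ∈ Finset.univ.erase l0, (1 : ℝ) / ((l : ℕ) : ℝ) ≤ 1 + Real.log L := by
  set g : Fin L → ℝ := fun l => if (l : ℕ) = 0 then 0 else 1 / ((l : ℕ) : ℝ) with hg
  have e1 : ∑ l ∈ Finset.univ.erase l0, (1 : ℝ) / ((l : ℕ) : ℝ) = ∑ l, g l := by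
    rw [← Finset.add_sum_erase _ g (Finset.mem_univ l0)]
    have : g l0 = 0 := by simp [hg, h0]
    rw [this, zero_add]
    refine Finset.sum_congr rfl fun l hl => ?_
    have hne : l ≠ l0 := Finset.ne_of_mem_erase hl
    have : (l : ℕ) ≠ 0 := by
      intro h; exact hne (Fin.ext (by omega))
    simp [hg, this]
  rw [e1]
  have e15 : ∑ l, g l = ∑ k ∈ Finset.range L, (if k = 0 then (0:ℝ) else 1 / (k:ℝ)) :=
    Fin.sum_univ_eq_sum_range (fun k => if k = 0 then (0:ℝ) else 1 / (k:ℝ)) L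
  rw [e15]
  obtain ⟨m, rfl⟩ : ∃ m, L = m + 1 := ⟨L - 1, by omega⟩
  rw [Finset.sum_range_succ']
  have e2 : (∑ k ∈ Finset.range m, if k + 1 = 0 then (0:ℝ) else 1 / ((k + 1 : ℕ) : ℝ))
      = (harmonic m : ℝ) := by
    rw [harmonic, Rat.cast_sum]
    refine Finset.sum_congr rfl fun i _ => ?_
    rw [if_neg (Nat.succ_ne_zero i)]
    push_cast
    ring
  rw [e2, if_pos rfl, add_zero]
  calc (harmonic m : ℝ) ≤ 1 + Real.log m := harmonic_le_one_add_log m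
    _ ≤ 1 + Real.log (m + 1) := by
        rcases Nat.eq_zero_or_pos m with h | h
        · simp [h]
        · have : Real.log (m : ℝ) ≤ Real.log ((m : ℝ) + 1) :=
            Real.log_le_log (by positivity) (by linarith)
          linarith
    _ = 1 + Real.log ((m + 1 : ℕ) : ℝ) := by push_cast; ring

/-- shelling inequality. -/
theorem shelling_inequality (p L s : ℕ) (hs : 1 ≤ s) (hL : 1 ≤ L) (w : Fin p → ℝ)
    (S : Fin L → Finset (Fin p))
    (hdisj : ∀ l l' : Fin L, l ≠ l' → Disjoint (S l) (S l'))
    (hcover : ∀ i : Fin p, ∃ l, i ∈ S l)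
    (hcard : ∀ l : Fin L, (l : ℕ) < L - 1 → (S l).card = s)
    (hcardle : ∀ l : Fin L, (S l).card ≤ s)
    (horder : ∀ l l' : Fin L, l < l' → ∀ i ∈ S l, ∀ i' ∈ S l', |w i'| ≤ |w i|) :
    ((∑ l, Real.sqrt (∑ i ∈ S l, (w i) ^ 2)) ^ 2 ≤
        2 * (l2V w) ^ 2 + 2 * (1 + Real.log (L : ℝ)) ^ 2 / (s : ℝ) * (l1V w) ^ 2) ∧
      ∀ l : Fin L, 1 ≤ (l : ℕ) →
        Real.sqrt (∑ i ∈ S l, (w i) ^ 2) ≤ l1V w / ((l : ℕ) * Real.sqrt (s : ℝ)) := by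
  have hpart2 : ∀ l : Fin L, 1 ≤ (l : ℕ) →
      Real.sqrt (∑ i ∈ S l, (w i) ^ 2) ≤ l1V w / ((l : ℕ) * Real.sqrt (s : ℝ)) := by
    intro l hl
    simpa [l1V] using shelling_part2 hs w S hdisj hcard hcardle horder l hl
  refine ⟨?_, hpart2⟩
  set f : Fin L → ℝ := fun l => Real.sqrt (∑ i ∈ S l, (w i) ^ 2) with hf
  set l0 : Fin L := ⟨0, hL⟩ with hl0
  have hsplit : ∑ l, f l = f l0 + ∑ l ∈ Finset.univ.erase l0, f l :=
    (Finset.add_sum_erase _ f (Finset.mem_univ l0)).symm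
  have hl1nn : 0 ≤ l1V w := Finset.sum_nonneg fun j _ => abs_nonneg _
  have hs0 : (0 : ℝ) < (s : ℝ) := by positivity
  have hssq : Real.sqrt (s : ℝ) ≠ 0 := by positivity
  have hlogL : 0 ≤ Real.log L := Real.log_nonneg (by exact_mod_cast hL)
  have hf0 : (f l0) ^ 2 ≤ (l2V w) ^ 2 := by
    rw [hf, l2V, Real.sq_sqrt (Finset.sum_nonneg fun i _ => sq_nonneg _),
      Real.sq_sqrt (Finset.sum_nonneg fun i _ => sq_nonneg _)]
    exact Finset.sum_le_sum_of_subset_of_nonneg (Finset.subset_univ _)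
      (fun i _ _ => sq_nonneg _)
  set B := ∑ l ∈ Finset.univ.erase l0, f l with hB
  have hBnn : 0 ≤ B := Finset.sum_nonneg fun l _ => Real.sqrt_nonneg _
  have hBle : B ≤ l1V w / Real.sqrt (s : ℝ) * (1 + Real.log L) := by
    calc B ≤ ∑ l ∈ Finset.univ.erase l0, l1V w / Real.sqrt (s : ℝ) * (1 / ((l : ℕ) : ℝ)) := by
          refine Finset.sum_le_sum fun l hl => ?_
          have hne : l ≠ l0 := Finset.ne_of_mem_erase hl
          have h1 : 1 ≤ (l : ℕ) := by
            rcases Nat.eq_zero_or_pos (l : ℕ) with h | h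
            · exact absurd (Fin.ext (by simp only [hl0]; omega)) hne
            · exact h
          calc f l ≤ l1V w / ((l : ℕ) * Real.sqrt (s : ℝ)) := hpart2 l h1
            _ = l1V w / Real.sqrt (s : ℝ) * (1 / ((l : ℕ) : ℝ)) := by
                rw [mul_one_div, div_div, mul_comm (Real.sqrt (s : ℝ)) (((l : ℕ) : ℕ) : ℝ)]
      _ = l1V w / Real.sqrt (s : ℝ) * ∑ l ∈ Finset.univ.erase l0, (1 / ((l : ℕ) : ℝ)) := by
          rw [Finset.mul_sum]
      _ ≤ l1V w / Real.sqrt (s : ℝ) * (1 + Real.log L) := by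
          refine mul_le_mul_of_nonneg_left ?_ (by positivity)
          exact harm_bound L hL l0 rfl
  have hBsq : B ^ 2 ≤ (1 + Real.log L) ^ 2 / (s : ℝ) * (l1V w) ^ 2 := by
    have hC : (l1V w / Real.sqrt (s : ℝ) * (1 + Real.log L)) ^ 2
        = (1 + Real.log L) ^ 2 / (s : ℝ) * (l1V w) ^ 2 := by
      rw [mul_pow, div_pow, Real.sq_sqrt hs0.le]
      ring
    calc B ^ 2 ≤ (l1V w / Real.sqrt (s : ℝ) * (1 + Real.log L)) ^ 2 := by
          apply pow_le_pow_left₀ hBnn hBle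
      _ = _ := hC
  rw [hsplit]
  have key : (f l0 + B) ^ 2 ≤ 2 * (f l0) ^ 2 + 2 * B ^ 2 := by
    nlinarith [sq_nonneg (f l0 - B)]
  have h2 : 2 * (1 + Real.log (L : ℝ)) ^ 2 / (s : ℝ) * (l1V w) ^ 2
      = 2 * ((1 + Real.log (L : ℝ)) ^ 2 / (s : ℝ) * (l1V w) ^ 2) := by ring
  rw [h2]
  linarith [hf0, hBsq, key]
end
end
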